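/- A join-semilattice μ with bottom element is isomorphic as a B-module to the free B-module on a set (i.e., to the semilattice of finite subsets of some set under union) if and only if every element of μ has a unique primitive decomposition, i.e., a unique expression as a finite join of ∨-primitive elements. -/

import Mathlib

/-- An element of a join-semilattice with bottom is `∨`-primitive if it is not `⊥`
and whenever it is a finite join it is one of the joinands. -/
def Primitive {μ : Type*} [SemilatticeSup μ] [OrderBot μ] (X : μ) : Prop :=
  X ≠ ⊥ ∧ ∀ F : Finset μ, X = F.sup id → X ∈ F

lemma map_finsetSup' {μ ν : Type*} [SemilatticeSup μ] [OrderBot μ] [SemilatticeSup ν]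
    [OrderBot ν] (e : μ ≃o ν) (F : Finset μ) : e (F.sup id) = F.sup (fun x => e x) := by
  classical
  induction F using Finset.induction with
  | empty => simp [e.map_bot]
  | insert a s h ih => simp [Finset.sup_insert, e.map_sup, ih]

lemma primitive_map {μ ν : Type*} [SemilatticeSup μ] [OrderBot μ] [SemilatticeSup ν]
    [OrderBot ν] (e : μ ≃o ν) {X : μ} (h : Primitive X) : Primitive (e X) := by
  classical
  refine ⟨fun hb => h.1 ?_, fun F hF => ?_⟩
  · have := congrArg e.symm hb
    simpa [e.symm.map_bot] using this
  · have hX : X = (F.image (fun y => e.symm y)).sup id := by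
      have h1 : e.symm (F.sup id) = F.sup (fun y => e.symm y) := map_finsetSup' e.symm F
      rw [Finset.sup_image]
      have : e.symm (e X) = X := e.symm_apply_apply X
      rw [← this, hF, h1]
      rfl
    have hmem := h.2 _ hX
    simp only [Finset.mem_image] at hmem
    obtain ⟨y, hy, hxy⟩ := hmem
    have : e X = y := by rw [← hxy, e.apply_symm_apply]
    rwa [this]

lemma finset_sup_singletons {T : Type} [DecidableEq T] (s : Finset T) :
    s = (s.image fun t => ({t} : Finset T)).sup id := by
  classical
  rw [Finset.sup_image]
  ext a
  simp [Finset.mem_sup]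

lemma primitive_finset_iff {T : Type} [DecidableEq T] (s : Finset T) :
    Primitive s ↔ ∃ t, s = {t} := by
  classical
  constructor
  · rintro ⟨hne, hp⟩
    have hmem := hp _ (finset_sup_singletons s)
    simp only [Finset.mem_image] at hmem
    obtain ⟨t, _, ht⟩ := hmem
    exact ⟨t, ht.symm⟩
  · rintro ⟨t, rfl⟩
    refine ⟨by simp [Finset.bot_eq_empty], ?_⟩
    intro F hF
    have ht : t ∈ F.sup id := by rw [← hF]; simp
    rw [Finset.mem_sup] at ht
    obtain ⟨u, hu, htu⟩ := ht
    have hsub : u ⊆ F.sup id := Finset.le_sup (f := id) hu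
    rw [← hF] at hsub
    have hut : u = {t} := by
      refine Finset.Subset.antisymm hsub ?_
      simpa [Finset.singleton_subset_iff] using htu
    rwa [← hut]

lemma finset_decomp {T : Type} [DecidableEq T] (s : Finset T) :
    ∃! F : Finset (Finset T), (∀ Y ∈ F, Primitive Y) ∧ s = F.sup id := by
  classical
  refine ⟨s.image fun t => ({t} : Finset T), ⟨?_, finset_sup_singletons s⟩, ?_⟩
  · intro Y hY
    simp only [Finset.mem_image] at hY
    obtain ⟨t, _, rfl⟩ := hY
    exact (primitive_finset_iff _).2 ⟨t, rfl⟩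
  · rintro G ⟨hGp, hGs⟩
    ext g
    simp only [Finset.mem_image]
    constructor
    · intro hg
      obtain ⟨t, rfl⟩ := (primitive_finset_iff g).1 (hGp g hg)
      have : t ∈ s := by
        rw [hGs, Finset.mem_sup]
        exact ⟨{t}, hg, by simp⟩
      exact ⟨t, this, rfl⟩
    · rintro ⟨t, ht, rfl⟩
      rw [hGs, Finset.mem_sup] at ht
      obtain ⟨u, hu, htu⟩ := ht
      obtain ⟨t', rfl⟩ := (primitive_finset_iff u).1 (hGp u hu)
      simp only [id] at htu
      rw [Finset.mem_singleton] at htu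
      subst htu
      exact hu

/-- A join-semilattice `μ` with bottom is isomorphic as a
`𝔹`-module to the free `𝔹`-module on a set (finite subsets of some set under union)
iff every element of `μ` has a unique primitive decomposition: a unique expression as
a finite join of `∨`-primitive elements. -/
theorem stmt5 (μ : Type) [SemilatticeSup μ] [OrderBot μ] :
    (∃ T : Type, haveI := Classical.decEq T; Nonempty (μ ≃o Finset T)) ↔
    (∀ X : μ, ∃! F : Finset μ, (∀ Y ∈ F, Primitive Y) ∧ X = F.sup id) := by
  classical
  constructor
  · rintro ⟨T, ⟨e⟩⟩
    haveI := Classical.decEq T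
    intro X
    obtain ⟨F', ⟨hF'p, hF's⟩, hF'u⟩ := finset_decomp (e X)
    refine ⟨F'.image fun y => e.symm y, ⟨?_, ?_⟩, ?_⟩
    · intro Y hY
      simp only [Finset.mem_image] at hY
      obtain ⟨y, hy, rfl⟩ := hY
      exact primitive_map e.symm (hF'p y hy)
    · rw [Finset.sup_image]
      have h1 : e.symm (F'.sup id) = F'.sup (fun y => e.symm y) := map_finsetSup' e.symm F'
      rw [← hF's, e.symm_apply_apply] at h1
      simpa using h1
    · rintro G ⟨hGp, hGs⟩
      have hGe : G.image (fun x => e x) = F' := by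
        refine hF'u _ ⟨?_, ?_⟩
        · intro Y hY
          simp only [Finset.mem_image] at hY
          obtain ⟨y, hy, rfl⟩ := hY
          exact primitive_map e (hGp y hy)
        · rw [Finset.sup_image, hGs]
          exact map_finsetSup' e G
      rw [← hGe, Finset.image_image]
      ext x
      simp
  · intro h
    refine ⟨{P : μ // Primitive P}, ⟨?_⟩⟩
    set D : μ → Finset μ := fun X => (h X).choose with hD
    have hDp : ∀ X, ∀ Y ∈ D X, Primitive Y := fun X => (h X).choose_spec.1.1
    have hDs : ∀ X, X = (D X).sup id := fun X => (h X).choose_spec.1.2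
    have hDu : ∀ X F, ((∀ Y ∈ F, Primitive Y) ∧ X = F.sup id) → F = D X :=
      fun X F hF => (h X).choose_spec.2 F hF
    have hmem : ∀ (P X : μ), Primitive P → (P ∈ D X ↔ P ≤ X) := by
      intro P X hP
      constructor
      · intro hPD
        have := Finset.le_sup (f := id) hPD
        rw [← hDs X] at this
        exact this
      · intro hPX
        have hins : insert P (D X) = D X := by
          refine hDu X _ ⟨?_, ?_⟩
          · intro Y hY
            rcases Finset.mem_insert.1 hY with rfl | hY
            · exact hP
            · exact hDp X Y hY
          · rw [Finset.sup_insert]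
            have : (D X).sup id = X := (hDs X).symm
            rw [this]
            simpa using sup_eq_right.2 hPX
        rw [← hins]
        exact Finset.mem_insert_self P (D X)
    let emb : {P : μ // Primitive P} ↪ μ := Function.Embedding.subtype Primitive
    have subtype_map : ∀ X : μ, ((D X).subtype Primitive).map emb = D X := by
      intro X
      rw [Finset.subtype_map]
      exact Finset.filter_true_of_mem (hDp X)
    refine
      { toFun := fun X => (D X).subtype Primitive
        invFun := fun G => (G.map emb).sup id
        left_inv := ?_
        right_inv := ?_
        map_rel_iff' := ?_ }
    · intro X
      simp only [subtype_map X]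
      exact (hDs X).symm
    · intro G
      have hGp : ∀ Y ∈ G.map emb, Primitive Y := by
        intro Y hY
        simp only [Finset.mem_map] at hY
        obtain ⟨t, _, rfl⟩ := hY
        exact t.2
      have hDG : D ((G.map emb).sup id) = G.map emb := (hDu _ _ ⟨hGp, rfl⟩).symm
      apply Finset.map_injective emb
      rw [subtype_map, hDG]
    · intro X Y
      simp only [Equiv.coe_fn_mk]
      constructor
      · intro hsub
        have : (D X).sup id ≤ Y := by
          apply Finset.sup_le
          intro P hP
          have hPprim := hDp X P hP
          have h1 : (⟨P, hPprim⟩ : {P : μ // Primitive P}) ∈ (D X).subtype Primitive := by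
            simp [Finset.mem_subtype, hP]
          have h2 := hsub h1
          rw [Finset.mem_subtype] at h2
          exact (hmem P Y hPprim).1 h2
        rw [← hDs X] at this
        exact this
      · intro hXY t ht
        rw [Finset.mem_subtype] at ht ⊢
        exact (hmem t.1 Y t.2).2 (le_trans ((hmem t.1 X t.2).1 ht) hXY)
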